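/- In any semigroup S, the natural conjugacy relation ∼ₙ is contained in Green's relation D: if a ∼ₙ b then a D b. -/

import Mathlib

/-- Natural conjugacy. -/
def NatConj {S : Type*} [Semigroup S] (a b : S) : Prop :=
  ∃ g h : WithOne S,
    (a : WithOne S) * g = g * (b : WithOne S) ∧
    (b : WithOne S) * h = h * (a : WithOne S) ∧
    h * (a : WithOne S) * g = (b : WithOne S) ∧
    g * (b : WithOne S) * h = (a : WithOne S)

/-- Green's L relation: `S¹a = S¹b`. -/
def GreenL {S : Type*} [Semigroup S] (a b : S) : Prop :=
  (∃ x : WithOne S, x * (b : WithOne S) = (a : WithOne S)) ∧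
  (∃ y : WithOne S, y * (a : WithOne S) = (b : WithOne S))

/-- Green's R relation: `aS¹ = bS¹`. -/
def GreenR {S : Type*} [Semigroup S] (a b : S) : Prop :=
  (∃ x : WithOne S, (b : WithOne S) * x = (a : WithOne S)) ∧
  (∃ y : WithOne S, (a : WithOne S) * y = (b : WithOne S))

/-- Green's D relation, as the composition R ∘ L. -/
def GreenD {S : Type*} [Semigroup S] (a b : S) : Prop :=
  ∃ c : S, GreenR a c ∧ GreenL c b

/-- In any semigroup, ∼ₙ ⊆ D. -/
theorem natConj_subset_greenD {S : Type*} [Semigroup S] (a b : S)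
    (h : NatConj a b) : GreenD a b := by
  obtain ⟨g, h, h1, h2, h3, h4⟩ := h
  induction g using WithOne.recOneCoe with
  | one =>
    have hab : a = b := by
      have : (a : WithOne S) = (b : WithOne S) := by simpa using h1
      exact_mod_cast this
    subst hab
    exact ⟨a, ⟨⟨1, by simp⟩, ⟨1, by simp⟩⟩, ⟨⟨1, by simp⟩, ⟨1, by simp⟩⟩⟩
  | coe g' =>
    refine ⟨a * g', ⟨⟨h, ?_⟩, ⟨(g' : WithOne S), by push_cast; ring⟩⟩,
      ⟨⟨(g' : WithOne S), ?_⟩, ⟨h, ?_⟩⟩⟩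
    · push_cast
      rw [h1, h4]
    · push_cast
      rw [← h1]
    · push_cast
      rw [← mul_assoc]
      exact h3
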